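/- Let Ω ⊆ ℝⁿ (not assumed connected) be an open set admitting a convex function u : Ω → ℝ whose gradient becomes unbounded near every point of ∂Ω. Then Ω is connected. -/

import Mathlib

open Metric Set

/-- A linear functional bounded above by `K` on the ball of radius `r` has norm `≤ K / r`. -/
lemma opnorm_le_aux {n : ℕ} (p : EuclideanSpace ℝ (Fin n) →L[ℝ] ℝ) {r K : ℝ} (hr : 0 < r)
    (h : ∀ v : EuclideanSpace ℝ (Fin n), ‖v‖ ≤ r → p v ≤ K) : ‖p‖ ≤ K / r := by
  have hK : 0 ≤ K := by simpa using h 0 (by simp [hr.le])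
  refine p.opNorm_le_bound (by positivity) (fun v => ?_)
  rcases eq_or_ne v 0 with rfl | hv
  · simp
  · have hnv : 0 < ‖v‖ := norm_pos_iff.mpr hv
    have hsn : ∀ w : EuclideanSpace ℝ (Fin n), ‖w‖ = ‖v‖ → p w ≤ K * ‖v‖ / r := by
      intro w hw
      have h1 : p ((r / ‖v‖) • w) ≤ K := h _ (by
        rw [norm_smul, hw, Real.norm_eq_abs, abs_of_pos (by positivity)]
        rw [div_mul_cancel₀ _ hnv.ne'])
      rw [map_smul, smul_eq_mul] at h1
      rw [le_div_iff₀ hr]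
      calc p w * r = ‖v‖ * (r / ‖v‖ * p w) := by field_simp
        _ ≤ ‖v‖ * K := by exact mul_le_mul_of_nonneg_left h1 hnv.le
        _ = K * ‖v‖ := by ring
    have h1 := hsn v rfl
    have h2 := hsn (-v) (by simp)
    rw [map_neg] at h2
    rw [Real.norm_eq_abs, abs_le]
    have heq : K / r * ‖v‖ = K * ‖v‖ / r := by ring
    constructor
    · linarith
    · linarith

/-- Subgradient inequality for a convex function at a point of differentiability. -/
lemma subgrad_aux {n : ℕ} {Ω : Set (EuclideanSpace ℝ (Fin n))} (hΩopen : IsOpen Ω)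
    {u : EuclideanSpace ℝ (Fin n) → ℝ}
    (hconv : ∀ x ∈ Ω, ∀ y ∈ Ω, ∀ τ : ℝ, τ ∈ Ioo (0:ℝ) 1 →
      τ • x + (1 - τ) • y ∈ Ω →
      u (τ • x + (1 - τ) • y) ≤ τ * u x + (1 - τ) * u y)
    {x : EuclideanSpace ℝ (Fin n)} (hx : x ∈ Ω) (hd : DifferentiableAt ℝ u x)
    {w : EuclideanSpace ℝ (Fin n)} (hw : w ∈ Ω) :
    fderiv ℝ u x (w - x) ≤ u w - u x := by
  set v := w - x with hv
  set φ : ℝ → ℝ := fun τ => u (x + τ • v) with hφdef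
  have hφ : HasDerivAt φ (fderiv ℝ u x v) 0 := by
    have h1 : HasFDerivAt u (fderiv ℝ u x) x := hd.hasFDerivAt
    have h2 : HasDerivAt (fun τ : ℝ => x + τ • v) v 0 := by
      simpa using ((hasDerivAt_id (0:ℝ)).smul_const v).const_add x
    have h1' : HasFDerivAt u (fderiv ℝ u x) ((fun τ : ℝ => x + τ • v) 0) := by
      simpa using h1
    exact h1'.comp_hasDerivAt 0 h2
  have hslope : Filter.Tendsto (slope φ 0) (nhdsWithin 0 (Ioi (0:ℝ)))
      (nhds (fderiv ℝ u x v)) :=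
    (hasDerivAt_iff_tendsto_slope.mp hφ).mono_left
      (nhdsWithin_mono 0 (fun t ht => ne_of_gt ht))
  have hev : ∀ᶠ τ in nhdsWithin 0 (Ioi (0:ℝ)), slope φ 0 τ ≤ u w - u x := by
    have hΩev : ∀ᶠ τ in nhds (0:ℝ), x + τ • v ∈ Ω := by
      have hc : ContinuousAt (fun τ : ℝ => x + τ • v) 0 := by fun_prop
      have : Ω ∈ nhds ((fun τ : ℝ => x + τ • v) 0) := by
        simpa using hΩopen.mem_nhds hx
      exact hc.eventually_mem this
    have h1ev : ∀ᶠ τ in nhds (0:ℝ), τ < 1 := by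
      exact Filter.Tendsto.eventually_lt_const one_pos Filter.tendsto_id
    filter_upwards [nhdsWithin_le_nhds hΩev, nhdsWithin_le_nhds h1ev,
      self_mem_nhdsWithin] with τ hτΩ hτ1 hτpos
    have hτpos' : (0:ℝ) < τ := hτpos
    have hmem : τ • w + (1 - τ) • x ∈ Ω := by
      have : τ • w + (1 - τ) • x = x + τ • v := by
        rw [hv]; module
      rw [this]; exact hτΩ
    have hkey := hconv w hw x hx τ ⟨hτpos', hτ1⟩ hmem
    have heq : τ • w + (1 - τ) • x = x + τ • v := by rw [hv]; module
    rw [heq] at hkey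
    have hsl : slope φ 0 τ = (φ τ - φ 0) / τ := by
      rw [slope_def_field]; ring_nf
    rw [hsl, div_le_iff₀ hτpos']
    have hφ0 : φ 0 = u x := by simp [hφdef]
    have hφτ : φ τ = u (x + τ • v) := rfl
    rw [hφ0, hφτ]
    nlinarith [hkey]
  exact le_of_tendsto hslope hev

/-- An open set admitting a convex function with gradient blowing up at every
boundary point is connected. -/
theorem stmt_7 {n : ℕ} (Ω : Set (EuclideanSpace ℝ (Fin n))) (hΩopen : IsOpen Ω)
    (u : EuclideanSpace ℝ (Fin n) → ℝ)
    (hconv : ∀ x ∈ Ω, ∀ y ∈ Ω, ∀ τ : ℝ, τ ∈ Ioo (0:ℝ) 1 →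
      τ • x + (1 - τ) • y ∈ Ω →
      u (τ • x + (1 - τ) • y) ≤ τ * u x + (1 - τ) * u y)
    (hblow : ∀ x ∈ frontier Ω, ∀ δ > (0:ℝ), ∀ C : ℝ,
      ∃ y ∈ ball x δ ∩ Ω, DifferentiableAt ℝ u y ∧ C < ‖fderiv ℝ u y‖) :
    IsPreconnected Ω := by
  by_contra hnc
  rw [IsPreconnected] at hnc
  push_neg at hnc
  obtain ⟨U, V, hU, hV, hcover, ⟨a, haΩ, haU⟩, ⟨b, hbΩ, hbV⟩, hempty⟩ := hnc
  have hsegconn : IsPreconnected (segment ℝ a b) := (convex_segment a b).isPreconnected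
  -- the segment is not contained in Ω
  have hseg : ¬ segment ℝ a b ⊆ Ω := by
    intro hsub
    obtain ⟨c, hc1, hc2⟩ := hsegconn U V hU hV (hsub.trans hcover)
      ⟨a, left_mem_segment ℝ a b, haU⟩ ⟨b, right_mem_segment ℝ a b, hbV⟩
    exact absurd (show c ∈ Ω ∩ (U ∩ V) from ⟨hsub hc1, hc2⟩)
      (by rw [hempty]; exact notMem_empty c)
  obtain ⟨c, hcseg, hcΩ⟩ := not_subset.mp hseg
  -- the segment meets the frontier of Ω
  have hfr : (segment ℝ a b ∩ frontier Ω).Nonempty := by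
    by_contra hfr
    rw [not_nonempty_iff_eq_empty] at hfr
    have hsub' : segment ℝ a b ⊆ Ω ∪ (closure Ω)ᶜ := by
      intro x hxseg
      by_cases hxΩ : x ∈ Ω
      · exact Or.inl hxΩ
      · refine Or.inr ?_
        intro hxc
        have : x ∈ frontier Ω := by
          rw [frontier, hΩopen.interior_eq]
          exact ⟨hxc, hxΩ⟩
        exact absurd (mem_inter hxseg this) (by rw [hfr]; exact notMem_empty x)
    have hcnc : c ∉ closure Ω := by
      intro hcc
      have : c ∈ frontier Ω := by
        rw [frontier, hΩopen.interior_eq]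
        exact ⟨hcc, hcΩ⟩
      exact absurd (mem_inter hcseg this) (by rw [hfr]; exact notMem_empty c)
    obtain ⟨x, _, hx1, hx2⟩ := hsegconn Ω (closure Ω)ᶜ hΩopen
      isClosed_closure.isOpen_compl hsub'
      ⟨a, left_mem_segment ℝ a b, haΩ⟩ ⟨c, hcseg, hcnc⟩
    exact hx2 (subset_closure hx1)
  obtain ⟨z, hzseg, hzfr⟩ := hfr
  obtain ⟨t, s, ht0, hs0, hts, hz⟩ := hzseg
  -- radii around a and b
  obtain ⟨ra, hra, hball_a⟩ := Metric.isOpen_iff.mp hΩopen a haΩ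
  obtain ⟨rb, hrb, hball_b⟩ := Metric.isOpen_iff.mp hΩopen b hbΩ
  set r' : ℝ := min ra rb with hr'def
  have hr' : 0 < r' := lt_min hra hrb
  set r : ℝ := r' / 2 with hrdef
  have hr : 0 < r := by positivity
  have hba : ball a r' ⊆ Ω := (ball_subset_ball (min_le_left _ _)).trans hball_a
  have hbb : ball b r' ⊆ Ω := (ball_subset_ball (min_le_right _ _)).trans hball_b
  have hcba : closedBall a r ⊆ ball a r' := closedBall_subset_ball (by simp [hrdef]; linarith)
  have hcbb : closedBall b r ⊆ ball b r' := closedBall_subset_ball (by simp [hrdef]; linarith)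
  -- u is convex, hence continuous, on the balls around a and b
  have hconvOn : ∀ c : EuclideanSpace ℝ (Fin n), ball c r' ⊆ Ω → ConvexOn ℝ (ball c r') u := by
    intro c hsub
    refine ⟨convex_ball c r', fun x hx y hy p q hp hq hpq => ?_⟩
    rcases eq_or_lt_of_le hp with hp0 | hp0
    · have hq1 : q = 1 := by linarith
      simp [← hp0, hq1]
    rcases eq_or_lt_of_le hq with hq0 | hq0
    · have hp1 : p = 1 := by linarith
      simp [← hq0, hp1]
    have hmem : p • x + q • y ∈ ball c r' := (convex_ball c r') hx hy hp hq hpq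
    have hq' : q = 1 - p := by linarith
    rw [hq']
    exact hconv x (hsub hx) y (hsub hy) p ⟨hp0, by linarith⟩ (by rw [← hq']; exact hsub hmem)
  -- bounds on u near a and b
  have hbound : ∀ c : EuclideanSpace ℝ (Fin n), ball c r' ⊆ Ω → closedBall c r ⊆ ball c r' →
      ∃ M : ℝ, ∀ w ∈ closedBall c r, u w ≤ M := by
    intro c hsub hcb
    have hcont : ContinuousOn u (closedBall c r) :=
      ((hconvOn c hsub).continuousOn isOpen_ball).mono hcb
    obtain ⟨w0, _, hw0⟩ := (isCompact_closedBall c r).exists_isMaxOn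
      ⟨c, mem_closedBall_self hr.le⟩ hcont
    exact ⟨u w0, fun w hw => hw0 hw⟩
  obtain ⟨Ma, hMa⟩ := hbound a hba hcba
  obtain ⟨Mb, hMb⟩ := hbound b hbb hcbb
  -- a fixed differentiability point gives a global affine lower bound
  obtain ⟨y₀, ⟨_, hy₀Ω⟩, hy₀d, _⟩ := hblow z hzfr 1 one_pos 0
  set p₀ := fderiv ℝ u y₀ with hp₀def
  have hlow : ∀ y ∈ Ω, u y₀ - ‖p₀‖ * ‖y - y₀‖ ≤ u y := by
    intro y hy
    have h1 := subgrad_aux hΩopen hconv hy₀Ω hy₀d hy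
    have h2 : -(‖p₀‖ * ‖y - y₀‖) ≤ p₀ (y - y₀) := by
      have := p₀.le_opNorm (y - y₀)
      rw [Real.norm_eq_abs] at this
      have := neg_abs_le (p₀ (y - y₀))
      linarith [p₀.le_opNorm (y - y₀), (Real.norm_eq_abs (p₀ (y - y₀))) ▸
        p₀.le_opNorm (y - y₀)]
    linarith
  set δ : ℝ := r / 2 with hδdef
  have hδ : 0 < δ := by positivity
  set m : ℝ := u y₀ - ‖p₀‖ * (δ + ‖z - y₀‖) with hmdef
  set B : ℝ := t * (Ma - m) + s * (Mb - m) with hBdef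
  set C : ℝ := 2 * B / r with hCdef
  obtain ⟨y, ⟨hyball, hyΩ⟩, hyd, hyC⟩ := hblow z hzfr δ hδ C
  set p := fderiv ℝ u y with hpdef
  have hyz : ‖y - z‖ ≤ δ := by
    have := mem_ball.mp hyball
    rw [dist_eq_norm] at this
    linarith
  -- lower bound on u y
  have hym : m ≤ u y := by
    have h1 := hlow y hyΩ
    have h2 : ‖y - y₀‖ ≤ δ + ‖z - y₀‖ := by
      calc ‖y - y₀‖ ≤ ‖y - z‖ + ‖z - y₀‖ := norm_sub_le_norm_sub_add_norm_sub y z y₀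
        _ ≤ δ + ‖z - y₀‖ := by linarith
    have h3 : ‖p₀‖ * ‖y - y₀‖ ≤ ‖p₀‖ * (δ + ‖z - y₀‖) :=
      mul_le_mul_of_nonneg_left h2 (norm_nonneg _)
    rw [hmdef]; linarith
  -- key bound on p on the ball of radius r
  have hkey : ∀ v : EuclideanSpace ℝ (Fin n), ‖v‖ ≤ r → p v ≤ B + ‖p‖ * δ := by
    intro v hv
    have hw1m : a + v ∈ closedBall a r := by
      rw [mem_closedBall, dist_eq_norm]; simpa using hv
    have hw2m : b + v ∈ closedBall b r := by
      rw [mem_closedBall, dist_eq_norm]; simpa using hv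
    have hw1Ω : a + v ∈ Ω := hba (hcba hw1m)
    have hw2Ω : b + v ∈ Ω := hbb (hcbb hw2m)
    have g1 := subgrad_aux hΩopen hconv hyΩ hyd hw1Ω
    have g2 := subgrad_aux hΩopen hconv hyΩ hyd hw2Ω
    have hua : u (a + v) ≤ Ma := hMa _ hw1m
    have hub : u (b + v) ≤ Mb := hMb _ hw2m
    have g1' : p ((a + v) - y) ≤ Ma - m := by rw [hpdef]; linarith
    have g2' : p ((b + v) - y) ≤ Mb - m := by rw [hpdef]; linarith
    have g1'' : t * p ((a + v) - y) ≤ t * (Ma - m) :=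
      mul_le_mul_of_nonneg_left g1' ht0
    have g2'' : s * p ((b + v) - y) ≤ s * (Mb - m) :=
      mul_le_mul_of_nonneg_left g2' hs0
    have hs' : s = 1 - t := by linarith
    have hlin : t • ((a + v) - y) + s • ((b + v) - y) = (z + v) - y := by
      rw [← hz, hs']; module
    have hplin : p ((z + v) - y) = t * p ((a + v) - y) + s * p ((b + v) - y) := by
      rw [← hlin, map_add, map_smul, map_smul, smul_eq_mul, smul_eq_mul]
    have hpv : p v = p ((z + v) - y) + p (y - z) := by
      rw [← map_add]
      congr 1
      abel
    have hpyz : p (y - z) ≤ ‖p‖ * δ := by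
      have h1 := p.le_opNorm (y - z)
      rw [Real.norm_eq_abs] at h1
      have h2 : ‖p‖ * ‖y - z‖ ≤ ‖p‖ * δ := mul_le_mul_of_nonneg_left hyz (norm_nonneg _)
      have h3 := le_abs_self (p (y - z))
      linarith
    rw [hpv, hplin, hBdef]
    linarith
  have hfinal : ‖p‖ ≤ (B + ‖p‖ * δ) / r := opnorm_le_aux p hr hkey
  have h1 : ‖p‖ * r ≤ B + ‖p‖ * δ := (le_div_iff₀ hr).mp hfinal
  have h2 : 2 * B < ‖p‖ * r := by
    have := (div_lt_iff₀ hr).mp hyC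
    linarith
  have hδr : δ = r / 2 := rfl
  rw [hδr] at h1
  linarith
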